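/- Let ν ∈ (0,1), and let ψ ∈ L²(0,∞) with -ψ'' + ((ν²-1/4)/x²)ψ =: g ∈ L²(0,∞). Define χ(x) = x^{-ν-1/2} ψ(x). Then (x^{2ν+1} χ'(x))' = -x^{ν+1/2} g(x), and the right-hand side is integrable near 0; consequently there is C₁ ∈ ℂ with χ'(x) = C₁ x^{-1-2ν} - x^{-1-2ν} ∫₀ˣ y^{ν+1/2} g(y) dy. -/

import Mathlib

open MeasureTheory Set

/-- `χ(x) = x^{-ν-1/2} ψ(x)`. -/
noncomputable def chiFun (ν : ℝ) (ψ : ℝ → ℂ) : ℝ → ℂ :=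
  fun x => ((x ^ (-ν - 1/2) : ℝ) : ℂ) * ψ x

/-- The key structural identity in the proof of Theorem 2.1: with
`g = -ψ'' + ((ν²-1/4)/x²)ψ ∈ L²` and `χ = x^{-ν-1/2}ψ`, one has
`(x^{2ν+1} χ')' = -x^{ν+1/2} g`, the right-hand side is integrable near `0`, and hence
`χ'(x) = C₁ x^{-1-2ν} - x^{-1-2ν} ∫₀ˣ y^{ν+1/2} g(y) dy` for some constant `C₁`. -/
theorem stmt_12 (ν : ℝ) (hν : ν ∈ Ioo (0:ℝ) 1) (ψ g : ℝ → ℂ)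
    (hψ : ∀ x ∈ Ioi (0:ℝ), DifferentiableAt ℝ ψ x)
    (hψ' : ∀ x ∈ Ioi (0:ℝ), DifferentiableAt ℝ (deriv ψ) x)
    (hψL2 : IntegrableOn (fun x => ‖ψ x‖ ^ 2) (Ioi (0:ℝ)))
    (hgL2 : IntegrableOn (fun x => ‖g x‖ ^ 2) (Ioi (0:ℝ)))
    (hgdef : ∀ x ∈ Ioi (0:ℝ),
      g x = -(deriv (deriv ψ) x) + (((ν ^ 2 - 1/4) / x ^ 2 : ℝ) : ℂ) * ψ x) :
    (∀ x ∈ Ioi (0:ℝ),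
      deriv (fun t : ℝ => ((t ^ (2 * ν + 1) : ℝ) : ℂ) * deriv (chiFun ν ψ) t) x =
        -((x ^ (ν + 1/2) : ℝ) : ℂ) * g x) ∧
    IntegrableOn (fun y : ℝ => ((y ^ (ν + 1/2) : ℝ) : ℂ) * g y) (Ioo (0:ℝ) 1) ∧
    ∃ C₁ : ℂ, ∀ x ∈ Ioi (0:ℝ),
      deriv (chiFun ν ψ) x = C₁ * ((x ^ (-1 - 2 * ν) : ℝ) : ℂ) -
        ((x ^ (-1 - 2 * ν) : ℝ) : ℂ) * ∫ y in Ioo (0:ℝ) x, ((y ^ (ν + 1/2) : ℝ) : ℂ) * g y := by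
  obtain ⟨hν0, hν1⟩ := hν
  set h : ℝ → ℂ := fun y : ℝ => ((y ^ (ν + 1/2) : ℝ) : ℂ) * g y with hhdef
  set Φ : ℝ → ℂ := fun t : ℝ => ((t ^ (2 * ν + 1) : ℝ) : ℂ) * deriv (chiFun ν ψ) t with hΦdef
  -- derivative of chi
  have hchi : ∀ x ∈ Ioi (0:ℝ), HasDerivAt (chiFun ν ψ)
      ((((-ν - 1/2) * x ^ (-ν - 1/2 - 1) : ℝ) : ℂ) * ψ x
        + ((x ^ (-ν - 1/2) : ℝ) : ℂ) * deriv ψ x) x := by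
    intro x hx
    have h1 : HasDerivAt (fun t : ℝ => ((t ^ (-ν - 1/2) : ℝ) : ℂ))
        (((-ν - 1/2) * x ^ (-ν - 1/2 - 1) : ℝ) : ℂ) x :=
      (Real.hasDerivAt_rpow_const (p := -ν - 1/2) (Or.inl (ne_of_gt hx))).ofReal_comp
    exact h1.mul (hψ x hx).hasDerivAt
  -- the explicit form of Φ on Ioi 0
  set E : ℝ → ℂ := fun t : ℝ => (((-ν - 1/2) * t ^ (ν - 1/2) : ℝ) : ℂ) * ψ t
      + ((t ^ (ν + 1/2) : ℝ) : ℂ) * deriv ψ t with hEdef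
  have hΦE : ∀ t ∈ Ioi (0:ℝ), Φ t = E t := by
    intro t ht
    have hd := (hchi t ht).deriv
    have h2 : (t : ℝ) ^ (2 * ν + 1) * t ^ (-ν - 1/2 - 1) = t ^ (ν - 1/2) := by
      rw [← Real.rpow_add ht]; congr 1; ring
    have h3 : (t : ℝ) ^ (2 * ν + 1) * t ^ (-ν - 1/2) = t ^ (ν + 1/2) := by
      rw [← Real.rpow_add ht]; congr 1; ring
    calc Φ t = (((t ^ (2 * ν + 1) * t ^ (-ν - 1/2 - 1)) * (-ν - 1/2) : ℝ) : ℂ) * ψ t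
            + (((t ^ (2 * ν + 1) * t ^ (-ν - 1/2) : ℝ)) : ℂ) * deriv ψ t := by
          simp only [hΦdef]; rw [hd]; push_cast; ring
      _ = E t := by
          rw [h2, h3, hEdef]; push_cast; ring
  -- the derivative of Φ on Ioi 0
  have hΦderiv : ∀ x ∈ Ioi (0:ℝ), HasDerivAt Φ (-((x ^ (ν + 1/2) : ℝ) : ℂ) * g x) x := by
    intro x hx
    have hr1 : HasDerivAt (fun t : ℝ => (((-ν - 1/2) * t ^ (ν - 1/2) : ℝ) : ℂ))
        (((-ν - 1/2) * ((ν - 1/2) * x ^ (ν - 1/2 - 1)) : ℝ) : ℂ) x :=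
      (((Real.hasDerivAt_rpow_const (p := ν - 1/2) (Or.inl (ne_of_gt hx)))).const_mul
        (-ν - 1/2)).ofReal_comp
    have hr2 : HasDerivAt (fun t : ℝ => ((t ^ (ν + 1/2) : ℝ) : ℂ))
        (((ν + 1/2) * x ^ (ν + 1/2 - 1) : ℝ) : ℂ) x :=
      (Real.hasDerivAt_rpow_const (p := ν + 1/2) (Or.inl (ne_of_gt hx))).ofReal_comp
    have hE : HasDerivAt E
        ((((-ν - 1/2) * ((ν - 1/2) * x ^ (ν - 1/2 - 1)) : ℝ) : ℂ) * ψ x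
          + (((-ν - 1/2) * x ^ (ν - 1/2) : ℝ) : ℂ) * deriv ψ x
          + ((((ν + 1/2) * x ^ (ν + 1/2 - 1) : ℝ) : ℂ) * deriv ψ x
            + ((x ^ (ν + 1/2) : ℝ) : ℂ) * deriv (deriv ψ) x)) x :=
      (hr1.mul (hψ x hx).hasDerivAt).add (hr2.mul (hψ' x hx).hasDerivAt)
    have hEq : (((-ν - 1/2) * ((ν - 1/2) * x ^ (ν - 1/2 - 1)) : ℝ) : ℂ) * ψ x
          + (((-ν - 1/2) * x ^ (ν - 1/2) : ℝ) : ℂ) * deriv ψ x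
          + ((((ν + 1/2) * x ^ (ν + 1/2 - 1) : ℝ) : ℂ) * deriv ψ x
            + ((x ^ (ν + 1/2) : ℝ) : ℂ) * deriv (deriv ψ) x)
        = -((x ^ (ν + 1/2) : ℝ) : ℂ) * g x := by
      have e2 : ν + 1/2 - 1 = ν - 1/2 := by ring
      have e3 : (x : ℝ) ^ (ν + 1/2) / x ^ (2:ℕ) = x ^ (ν - 1/2 - 1) := by
        rw [← Real.rpow_natCast x 2, ← Real.rpow_sub hx]
        congr 1
        push_cast
        ring
      have key : (-ν - 1/2) * ((ν - 1/2) * x ^ (ν - 1/2 - 1))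
          = -(x ^ (ν + 1/2) * ((ν ^ 2 - 1/4) / x ^ (2:ℕ))) := by
        rw [show x ^ (ν + 1/2) * ((ν ^ 2 - 1/4) / x ^ (2:ℕ))
            = (ν ^ 2 - 1/4) * (x ^ (ν + 1/2) / x ^ (2:ℕ)) by ring, e3]
        ring
      have keyC : (((-ν - 1/2) * ((ν - 1/2) * x ^ (ν - 1/2 - 1)) : ℝ) : ℂ)
          = -(((x ^ (ν + 1/2) : ℝ) : ℂ) * (((ν ^ 2 - 1/4) / x ^ 2 : ℝ) : ℂ)) := by
        rw [← Complex.ofReal_mul, ← Complex.ofReal_neg]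
        exact congrArg _ key
      have zC : (((-ν - 1/2) * x ^ (ν - 1/2) : ℝ) : ℂ)
          + (((ν + 1/2) * x ^ (ν - 1/2) : ℝ) : ℂ) = 0 := by
        push_cast; ring
      rw [hgdef x hx, e2]
      linear_combination keyC * ψ x + zC * deriv ψ x
    have hmem : ∀ᶠ t in nhds x, Φ t = E t :=
      Filter.eventually_of_mem (isOpen_Ioi.mem_nhds hx) hΦE
    have hfin := hE.congr_of_eventuallyEq hmem
    rwa [hEq] at hfin
  -- measurability of g and h on Ioi 0
  have hψcont : ContinuousOn ψ (Ioi (0:ℝ)) :=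
    fun x hx => (hψ x hx).continuousAt.continuousWithinAt
  have hgm : AEStronglyMeasurable g (volume.restrict (Ioi (0:ℝ))) := by
    have h1 : AEStronglyMeasurable
        (fun x : ℝ => -(deriv (deriv ψ) x) + (((ν ^ 2 - 1/4) / x ^ 2 : ℝ) : ℂ) * ψ x)
        (volume.restrict (Ioi (0:ℝ))) := by
      apply AEStronglyMeasurable.add
      · exact ((stronglyMeasurable_deriv (deriv ψ)).aestronglyMeasurable).neg
      · refine AEStronglyMeasurable.mul ?_ (hψcont.aestronglyMeasurable measurableSet_Ioi)
        refine (Measurable.aestronglyMeasurable ?_)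
        exact Complex.measurable_ofReal.comp ((measurable_const.div (measurable_id.pow_const 2)))
    refine h1.congr ?_
    exact (ae_restrict_iff' measurableSet_Ioi).2 (ae_of_all _ (fun x hx => (hgdef x hx).symm))
  have hhm : AEStronglyMeasurable h (volume.restrict (Ioi (0:ℝ))) := by
    have hc : ContinuousOn (fun y : ℝ => ((y ^ (ν + 1/2) : ℝ) : ℂ)) (Ioi (0:ℝ)) := by
      intro y hy
      exact (Complex.continuous_ofReal.continuousAt.comp
        (Real.continuousAt_rpow_const y _ (Or.inl (ne_of_gt hy)))).continuousWithinAt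
    exact (hc.aestronglyMeasurable measurableSet_Ioi).mul hgm
  -- integrability of h near 0 and on bounded intervals
  have hIntOn : ∀ b : ℝ, 0 < b → IntegrableOn h (Ioo 0 b) := by
    intro b hb
    have hsub : Ioo (0:ℝ) b ⊆ Ioi 0 := fun y hy => hy.1
    refine Integrable.mono' (g := fun y => b ^ (ν + 1/2) * ((1 + ‖g y‖ ^ 2) / 2)) ?_ ?_ ?_
    · refine Integrable.const_mul ?_ _
      have h1 : IntegrableOn (fun _ : ℝ => (1:ℝ)) (Ioo 0 b) :=
        integrableOn_const measure_Ioo_lt_top.ne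
      exact ((h1.add (hgL2.mono_set hsub)).div_const 2)
    · exact hhm.mono_measure (Measure.restrict_mono hsub le_rfl)
    · refine (ae_restrict_iff' measurableSet_Ioo).2 (ae_of_all _ (fun y hy => ?_))
      have hy0 : (0:ℝ) < y := hy.1
      have hexp : (0:ℝ) ≤ ν + 1/2 := by linarith
      have hn : ‖h y‖ = y ^ (ν + 1/2) * ‖g y‖ := by
        simp only [hhdef]
        rw [norm_mul, Complex.norm_real, Real.norm_eq_abs,
          abs_of_nonneg (Real.rpow_nonneg hy0.le _)]
      rw [hn]
      have h1 : y ^ (ν + 1/2) ≤ b ^ (ν + 1/2) :=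
        Real.rpow_le_rpow hy0.le hy.2.le hexp
      have h2 : ‖g y‖ ≤ (1 + ‖g y‖ ^ 2) / 2 := by nlinarith [norm_nonneg (g y), sq_nonneg (‖g y‖ - 1)]
      exact mul_le_mul h1 h2 (norm_nonneg _) (Real.rpow_nonneg hb.le _)
  have hIoc : ∀ a b : ℝ, 0 ≤ a → IntegrableOn h (Ioc a b) := by
    intro a b ha
    rcases le_or_gt b a with hb | hb
    · rw [Ioc_eq_empty (not_lt.2 hb)]; exact integrableOn_empty
    · exact (hIntOn (b + 1) (by linarith)).mono_set
        (fun y hy => ⟨lt_of_le_of_lt ha hy.1, lt_of_le_of_lt hy.2 (by linarith)⟩)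
  have hII : ∀ a b : ℝ, 0 ≤ a → 0 ≤ b → IntervalIntegrable h volume a b :=
    fun a b ha hb => ⟨hIoc a b ha, hIoc b a hb⟩
  refine ⟨fun x hx => (hΦderiv x hx).deriv, hIntOn 1 one_pos, ?_⟩
  refine ⟨Φ 1 + ∫ y in Ioo (0:ℝ) 1, h y, fun x hx => ?_⟩
  have hx0 : (0:ℝ) < x := hx
  -- FTC between 1 and x
  have hftc : ∫ t in (1:ℝ)..x, (-h t) = Φ x - Φ 1 := by
    refine intervalIntegral.integral_eq_sub_of_hasDerivAt (fun t ht => ?_) ?_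
    · have ht0 : (0:ℝ) < t := by
        rcases le_total 1 x with hle | hle
        · rw [uIcc_of_le hle] at ht; linarith [ht.1]
        · rw [uIcc_of_ge hle] at ht; linarith [ht.1, hx0]
      have := hΦderiv t ht0
      simpa [hhdef, neg_mul] using this
    · exact (hII 1 x zero_le_one hx0.le).neg
  have hsplit : (∫ y in Ioo (0:ℝ) x, h y) = (∫ y in Ioo (0:ℝ) 1, h y) + ∫ t in (1:ℝ)..x, h t := by
    have h01 : (∫ t in (0:ℝ)..1, h t) = ∫ y in Ioo (0:ℝ) 1, h y := by
      rw [intervalIntegral.integral_of_le zero_le_one, integral_Ioc_eq_integral_Ioo]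
    have h0x : (∫ t in (0:ℝ)..x, h t) = ∫ y in Ioo (0:ℝ) x, h y := by
      rw [intervalIntegral.integral_of_le hx0.le, integral_Ioc_eq_integral_Ioo]
    rw [← h01, ← h0x]
    exact (intervalIntegral.integral_add_adjacent_intervals
      (hII 0 1 le_rfl zero_le_one) (hII 1 x zero_le_one hx0.le)).symm
  have hΦx : Φ x = (Φ 1 + ∫ y in Ioo (0:ℝ) 1, h y) - ∫ y in Ioo (0:ℝ) x, h y := by
    have := hftc
    rw [intervalIntegral.integral_neg] at this
    rw [hsplit]
    linear_combination -this
  have hone : ((x ^ (-1 - 2 * ν) : ℝ) : ℂ) * ((x ^ (2 * ν + 1) : ℝ) : ℂ) = 1 := by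
    rw [← Complex.ofReal_mul, ← Real.rpow_add hx0,
      show (-1 - 2 * ν) + (2 * ν + 1) = 0 by ring, Real.rpow_zero, Complex.ofReal_one]
  have hkey : deriv (chiFun ν ψ) x = ((x ^ (-1 - 2 * ν) : ℝ) : ℂ) * Φ x := by
    rw [hΦdef]
    calc deriv (chiFun ν ψ) x
        = (((x ^ (-1 - 2 * ν) : ℝ) : ℂ) * ((x ^ (2 * ν + 1) : ℝ) : ℂ)) * deriv (chiFun ν ψ) x := by
          rw [hone, one_mul]
      _ = ((x ^ (-1 - 2 * ν) : ℝ) : ℂ) * (((x ^ (2 * ν + 1) : ℝ) : ℂ) * deriv (chiFun ν ψ) x) := by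
          ring
  rw [hkey, hΦx]
  ring
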